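/- arXiv:1309.2649 — 2 statements merged into one kernel-verified Lean document; each statement's English description precedes it below -/
import Mathlib

section
/- Suppose Re ⟨w, B(s) w⟩ ≥ γ ‖R(s) w‖² for all w ∈ V and all s with Re s ≥ σ. Let Δt > 0 and let ρ ∈ (0,1) be such that Re δ(ζ) ≥ σ Δt for all |ζ| ≤ ρ, where δ(ζ) = (1−ζ) + (1−ζ)²/2. Let the convolution quadrature weight operators B_n : V → V' and R_n : V → V be defined by the power series B(δ(ζ)/Δt) = Σ_{n≥0} B_n ζ^n and R(δ(ζ)/Δt) = Σ_{n≥0} R_n ζ^n. Then for every finitely supported function w : ℕ → V one has Σ_{n≥0} ρ^{2n} Re ⟨w(n), Σ_{j=0}^n B_{n−j} w(j)⟩ ≥ γ Σ_{n≥0} ρ^{2n} ‖Σ_{j=0}^n R_{n−j} w(j)‖². -/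
/-- The generating function of the second-order backward difference formula (BDF2). -/
noncomputable def bdf2 (ζ : ℂ) : ℂ := (1 - ζ) + (1 - ζ) ^ 2 / 2

open Complex Finset Real MeasureTheory Filter

section Aux

variable {V : Type*} [NormedAddCommGroup V] [InnerProductSpace ℂ V] [CompleteSpace V]

local notation "⟪" x ", " y "⟫" => @inner ℂ _ _ x y

set_option linter.unusedSectionVars false

lemma hasSum_antidiag {E : Type*} [AddCommGroup E] [UniformSpace E] [IsUniformAddGroup E]
    [RegularSpace E] {b : ℕ × ℕ → E} {s : E}
    (hs : HasSum b s) :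
    HasSum (fun n => ∑ p ∈ Finset.HasAntidiagonal.antidiagonal n, b p) s := by
  have h2 : HasSum (fun x : Σ n : ℕ, Finset.HasAntidiagonal.antidiagonal n => b x.2) s :=
    (Finset.HasAntidiagonal.sigmaAntidiagonalEquivProd.hasSum_iff).2 hs
  exact h2.sigma fun n => by
    simpa [Finset.sum_attach] using (hasSum_fintype (fun c : Finset.HasAntidiagonal.antidiagonal n => b (c : ℕ × ℕ)))

lemma cauchy_apply {f : ℕ → (V →L[ℂ] V)} {g : ℕ → V} {F : V →L[ℂ] V} {G : V}
    (hfn : Summable fun n => ‖f n‖) (hgn : Summable fun n => ‖g n‖)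
    (hF : HasSum f F) (hG : HasSum g G) :
    HasSum (fun n => ∑ k ∈ Finset.range (n + 1), f k (g (n - k))) (F G) := by
  have hb : Summable fun p : ℕ × ℕ => ‖f p.1 (g p.2)‖ := by
    refine Summable.of_nonneg_of_le (fun p => norm_nonneg _) (fun p => ?_)
      (hfn.mul_of_nonneg hgn (fun n => norm_nonneg _) (fun n => norm_nonneg _))
    exact (f p.1).le_opNorm (g p.2)
  have hbs : Summable fun p : ℕ × ℕ => f p.1 (g p.2) := hb.of_norm
  obtain ⟨t, ht⟩ := hbs
  have houter : HasSum (fun k => f k G) t :=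
    ht.prod_fiberwise fun k => (f k).hasSum hG
  have houter' : HasSum (fun k => f k G) (F G) := by
    have := (ContinuousLinearMap.apply ℂ V G).hasSum hF
    simpa using this
  have htFG : t = F G := houter.unique houter'
  subst htFG
  have := hasSum_antidiag ht
  simpa [Finset.Nat.sum_antidiagonal_eq_sum_range_succ_mk] using this

lemma inner_hasSum_prod {xs ys : ℕ → V} {x y : V}
    (hxs : Summable fun n => ‖xs n‖) (hys : Summable fun n => ‖ys n‖)
    (hx : HasSum xs x) (hy : HasSum ys y) :
    HasSum (fun p : ℕ × ℕ => (⟪xs p.1, ys p.2⟫ : ℂ)) (⟪x, y⟫ : ℂ) := by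
  have hb : Summable fun p : ℕ × ℕ => ‖(⟪xs p.1, ys p.2⟫ : ℂ)‖ := by
    refine Summable.of_nonneg_of_le (fun p => norm_nonneg _) (fun p => ?_)
      (hxs.mul_of_nonneg hys (fun n => norm_nonneg _) (fun n => norm_nonneg _))
    exact norm_inner_le_norm _ _
  obtain ⟨t, ht⟩ := hb.of_norm
  have houter : HasSum (fun k => (⟪xs k, y⟫ : ℂ)) t :=
    ht.prod_fiberwise fun k => by simpa using (innerSL ℂ (xs k)).hasSum hy
  have houter' : HasSum (fun k => (⟪xs k, y⟫ : ℂ)) (⟪x, y⟫ : ℂ) := by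
    simpa using (innerSLFlip ℂ y).hasSum hx
  rwa [houter.unique houter'] at ht

lemma integral_phase (r : ℝ) (m n : ℕ) :
    (∫ θ in Set.Ioc (0:ℝ) (2*Real.pi),
      ((starRingEnd ℂ) ((r:ℂ) * Complex.exp (θ * Complex.I)))^m *
        ((r:ℂ) * Complex.exp (θ * Complex.I))^n) =
    if m = n then ((2*Real.pi*r^(2*m) : ℝ) : ℂ) else 0 := by
  have h2π : (0:ℝ) ≤ 2*Real.pi := by positivity
  rw [← intervalIntegral.integral_of_le h2π]
  have hint : ∀ θ : ℝ, ((starRingEnd ℂ) ((r:ℂ) * Complex.exp (θ * Complex.I)))^m *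
        ((r:ℂ) * Complex.exp (θ * Complex.I))^n
      = (r:ℂ)^(m+n) * Complex.exp ((((n:ℂ) - (m:ℂ)) * Complex.I) * θ) := by
    intro θ
    rw [map_mul, ← Complex.exp_conj, map_mul, Complex.conj_ofReal, Complex.conj_I,
      Complex.conj_ofReal]
    rw [mul_pow, mul_pow, ← Complex.exp_nat_mul, ← Complex.exp_nat_mul,
      pow_add]
    rw [mul_mul_mul_comm, ← Complex.exp_add]
    congr 1
    ring
  simp only [hint]
  rw [intervalIntegral.integral_const_mul]
  by_cases h : m = n
  · subst h
    simp only [sub_self, zero_mul, Complex.exp_zero]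
    rw [intervalIntegral.integral_const]
    simp only [if_true, sub_zero, Complex.real_smul, smul_eq_mul]
    push_cast
    ring
  · have hc : (((n:ℂ) - (m:ℂ)) * Complex.I) ≠ 0 := by
      have hnm : (n:ℂ) ≠ (m:ℂ) := fun hh => h (Nat.cast_injective hh).symm
      exact mul_ne_zero (sub_ne_zero.2 hnm) Complex.I_ne_zero
    rw [integral_exp_mul_complex hc]
    rw [if_neg h]
    have : Complex.exp ((((n:ℂ) - (m:ℂ)) * Complex.I) * (2*Real.pi)) = 1 := by
      have := Complex.exp_int_mul_two_pi_mul_I ((n:ℤ) - (m:ℤ))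
      rw [← this]
      congr 1
      push_cast
      ring
    simp [this]

lemma key_integral (r : ℝ) (hr0 : 0 < r) (u v : ℕ → V) (x y : ℝ → V)
    (hu : Summable fun n => r ^ n * ‖u n‖) (hv : Summable fun n => r ^ n * ‖v n‖)
    (hx : ∀ θ : ℝ, HasSum (fun n => ((r:ℂ) * Complex.exp (θ * Complex.I)) ^ n • u n) (x θ))
    (hy : ∀ θ : ℝ, HasSum (fun n => ((r:ℂ) * Complex.exp (θ * Complex.I)) ^ n • v n) (y θ)) :
    (∫ θ in Set.Ioc (0:ℝ) (2*Real.pi), (⟪x θ, y θ⟫ : ℂ)) =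
      ((2*Real.pi : ℝ) : ℂ) * ∑' k : ℕ, ((r^(2*k) : ℝ) : ℂ) * (⟪u k, v k⟫ : ℂ) := by
  set ζ : ℝ → ℂ := fun θ => (r:ℂ) * Complex.exp (θ * Complex.I) with hζdef
  have hζnorm : ∀ θ, ‖ζ θ‖ = r := by
    intro θ
    simp [hζdef, Complex.norm_exp, abs_of_pos hr0]
  -- the doubly-indexed integrand
  set F : ℕ × ℕ → ℝ → ℂ :=
    fun p θ => ((starRingEnd ℂ) (ζ θ))^p.1 * (ζ θ)^p.2 * (⟪u p.1, v p.2⟫ : ℂ) with hFdef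
  have hF_eq : ∀ θ, HasSum (fun p => F p θ) (⟪x θ, y θ⟫ : ℂ) := by
    intro θ
    have h1 : Summable fun n => ‖(ζ θ)^n • u n‖ := by
      refine Summable.of_nonneg_of_le (fun n => norm_nonneg _) (fun n => ?_) hu
      rw [norm_smul, norm_pow, hζnorm]
    have h2 : Summable fun n => ‖(ζ θ)^n • v n‖ := by
      refine Summable.of_nonneg_of_le (fun n => norm_nonneg _) (fun n => ?_) hv
      rw [norm_smul, norm_pow, hζnorm]
    have := inner_hasSum_prod h1 h2 (hx θ) (hy θ)
    convert this using 2 with p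
    rw [inner_smul_left, inner_smul_right, hFdef]
    simp only [map_pow]
    ring
  -- integrability and norm bounds for each term
  have hcont : ∀ p : ℕ × ℕ, Continuous (F p) := by
    intro p
    apply Continuous.mul
    apply Continuous.mul
    · exact ((Complex.continuous_conj.comp
        (continuous_const.mul ((Complex.continuous_ofReal.mul continuous_const).cexp))).pow _)
    · exact ((continuous_const.mul
        ((Complex.continuous_ofReal.mul continuous_const).cexp)).pow _)
    · exact continuous_const
  have hFnorm : ∀ p : ℕ × ℕ, ∀ θ : ℝ,
      ‖F p θ‖ ≤ (r ^ p.1 * ‖u p.1‖) * (r ^ p.2 * ‖v p.2‖) := by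
    intro p θ
    calc ‖F p θ‖ = r ^ p.1 * r ^ p.2 * ‖(⟪u p.1, v p.2⟫ : ℂ)‖ := by
          rw [hFdef]
          simp [norm_mul, norm_pow, RCLike.norm_conj, hζnorm]
      _ ≤ r ^ p.1 * r ^ p.2 * (‖u p.1‖ * ‖v p.2‖) := by
          have h1 : (0:ℝ) ≤ r ^ p.1 * r ^ p.2 := by positivity
          exact mul_le_mul_of_nonneg_left (norm_inner_le_norm _ _) h1
      _ = (r ^ p.1 * ‖u p.1‖) * (r ^ p.2 * ‖v p.2‖) := by ring
  have hμ : (volume (Set.Ioc (0:ℝ) (2*Real.pi))).toReal = 2*Real.pi := by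
    rw [Real.volume_Ioc, sub_zero, ENNReal.toReal_ofReal (by positivity)]
  have hint : ∀ p : ℕ × ℕ, IntegrableOn (F p) (Set.Ioc (0:ℝ) (2*Real.pi)) volume :=
    fun p => (hcont p).integrableOn_Ioc
  have hnormsum : Summable fun p : ℕ × ℕ =>
      ∫ θ in Set.Ioc (0:ℝ) (2*Real.pi), ‖F p θ‖ := by
    refine Summable.of_nonneg_of_le
      (fun p => integral_nonneg (fun θ => norm_nonneg _)) (fun p => ?_)
      (((hu.mul_of_nonneg hv (fun n => by positivity) (fun n => by positivity)).mul_left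
        (2*Real.pi)))
    calc ∫ θ in Set.Ioc (0:ℝ) (2*Real.pi), ‖F p θ‖
        ≤ ∫ _ in Set.Ioc (0:ℝ) (2*Real.pi), (r ^ p.1 * ‖u p.1‖) * (r ^ p.2 * ‖v p.2‖) := by
          refine setIntegral_mono_on (hint p).norm (integrableOn_const ?_)
            measurableSet_Ioc (fun θ _ => hFnorm p θ)
          rw [Real.volume_Ioc]; exact ENNReal.ofReal_ne_top
      _ = 2*Real.pi * ((r ^ p.1 * ‖u p.1‖) * (r ^ p.2 * ‖v p.2‖)) := by
          rw [setIntegral_const, smul_eq_mul, measureReal_def, hμ]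
  -- interchange sum and integral
  have hinterchange :
      HasSum (fun p : ℕ × ℕ => ∫ θ in Set.Ioc (0:ℝ) (2*Real.pi), F p θ)
        (∫ θ in Set.Ioc (0:ℝ) (2*Real.pi), (⟪x θ, y θ⟫ : ℂ)) := by
    have := MeasureTheory.hasSum_integral_of_summable_integral_norm
      (F := F) (μ := volume.restrict (Set.Ioc (0:ℝ) (2*Real.pi))) (fun p => hint p) hnormsum
    have heq : (∫ θ in Set.Ioc (0:ℝ) (2*Real.pi), (⟪x θ, y θ⟫ : ℂ))
        = ∫ θ in Set.Ioc (0:ℝ) (2*Real.pi), (∑' p : ℕ × ℕ, F p θ) :=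
      setIntegral_congr_fun measurableSet_Ioc (fun θ _ => ((hF_eq θ).tsum_eq).symm)
    rw [heq]
    exact this
  -- evaluate each integral
  have heval : ∀ p : ℕ × ℕ, (∫ θ in Set.Ioc (0:ℝ) (2*Real.pi), F p θ)
      = if p.1 = p.2 then ((2*Real.pi*r^(2*p.1) : ℝ) : ℂ) * (⟪u p.1, v p.2⟫ : ℂ) else 0 := by
    intro p
    rw [hFdef]
    have : (∫ θ in Set.Ioc (0:ℝ) (2*Real.pi),
        ((starRingEnd ℂ) (ζ θ))^p.1 * (ζ θ)^p.2 * (⟪u p.1, v p.2⟫ : ℂ))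
        = (∫ θ in Set.Ioc (0:ℝ) (2*Real.pi),
        ((starRingEnd ℂ) (ζ θ))^p.1 * (ζ θ)^p.2) * (⟪u p.1, v p.2⟫ : ℂ) := by
      rw [integral_mul_const]
    rw [this, integral_phase r p.1 p.2]
    by_cases h : p.1 = p.2 <;> simp [h]
  rw [← hinterchange.tsum_eq]
  have hsummable : Summable (fun p : ℕ × ℕ => ∫ θ in Set.Ioc (0:ℝ) (2*Real.pi), F p θ) :=
    hinterchange.summable
  calc (∑' p : ℕ × ℕ, ∫ θ in Set.Ioc (0:ℝ) (2*Real.pi), F p θ)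
      = ∑' (k : ℕ) (l : ℕ), ∫ θ in Set.Ioc (0:ℝ) (2*Real.pi), F (k, l) θ :=
        hsummable.tsum_prod' (fun k => (hsummable.prod_factor k))
    _ = ∑' k : ℕ, ((2*Real.pi*r^(2*k) : ℝ) : ℂ) * (⟪u k, v k⟫ : ℂ) := by
        congr 1
        funext k
        rw [tsum_eq_single k]
        · rw [heval (k, k)]
          simp
        · intro l hl
          rw [heval (k, l)]
          simp [Ne.symm hl]
    _ = ((2*Real.pi : ℝ) : ℂ) * ∑' k : ℕ, ((r^(2*k) : ℝ) : ℂ) * (⟪u k, v k⟫ : ℂ) := by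
        rw [← tsum_mul_left]
        congr 1
        funext k
        push_cast
        ring

lemma mul_summable {f g : ℕ → ℝ} (hf : Summable f) (hg : Summable g)
    (hf0 : ∀ n, 0 ≤ f n) (hg0 : ∀ n, 0 ≤ g n) : Summable fun n => f n * g n := by
  obtain ⟨C, hC⟩ := hf.tendsto_atTop_zero.bddAbove_range
  refine Summable.of_nonneg_of_le (fun n => mul_nonneg (hf0 n) (hg0 n)) (fun n => ?_)
    (hg.mul_left C)
  exact mul_le_mul_of_nonneg_right (hC (Set.mem_range_self n)) (hg0 n)

lemma core (γ : ℝ) (r : ℝ) (hr0 : 0 < r)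
    (w S T : ℕ → V) (X Y G : ℝ → V)
    (hwsum : Summable fun n => r ^ n * ‖w n‖)
    (hSsum : Summable fun n => r ^ n * ‖S n‖)
    (hTsum : Summable fun n => r ^ n * ‖T n‖)
    (hXsum : ∀ θ : ℝ, HasSum (fun n => ((r:ℂ) * Complex.exp (θ * Complex.I)) ^ n • w n) (X θ))
    (hGsum : ∀ θ : ℝ, HasSum (fun n => ((r:ℂ) * Complex.exp (θ * Complex.I)) ^ n • S n) (G θ))
    (hYsum : ∀ θ : ℝ, HasSum (fun n => ((r:ℂ) * Complex.exp (θ * Complex.I)) ^ n • T n) (Y θ))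
    (hpt : ∀ θ : ℝ, γ * ‖G θ‖ ^ 2 ≤ (⟪X θ, Y θ⟫ : ℂ).re) :
    γ * ∑' k : ℕ, r ^ (2*k) * ‖S k‖ ^ 2 ≤ ∑' k : ℕ, r ^ (2*k) * (⟪w k, T k⟫ : ℂ).re := by
  have hζn : ∀ θ : ℝ, ‖(r:ℂ) * Complex.exp (θ * Complex.I)‖ = r := by
    intro θ
    simp [Complex.norm_exp, abs_of_pos hr0]
  -- continuity of the three series
  have hcont : ∀ (u : ℕ → V) (Z : ℝ → V),
      (Summable fun n => r ^ n * ‖u n‖) →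
      (∀ θ : ℝ, HasSum (fun n => ((r:ℂ) * Complex.exp (θ * Complex.I)) ^ n • u n) (Z θ)) →
      Continuous Z := by
    intro u Z hu hZ
    have : Z = fun θ : ℝ => ∑' n, ((r:ℂ) * Complex.exp ((θ:ℂ) * Complex.I)) ^ n • u n := by
      funext θ; exact ((hZ θ).tsum_eq).symm
    rw [this]
    refine continuous_tsum (fun n => ?_) hu (fun n θ => ?_)
    · exact ((continuous_const.mul
        ((Complex.continuous_ofReal.mul continuous_const).cexp)).pow n).smul continuous_const
    · rw [norm_smul, norm_pow, hζn]
  have hXc : Continuous X := hcont w X hwsum hXsum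
  have hGc : Continuous G := hcont S G hSsum hGsum
  have hYc : Continuous Y := hcont T Y hTsum hYsum
  -- integrability
  have hXYint : IntegrableOn (fun θ => (⟪X θ, Y θ⟫ : ℂ)) (Set.Ioc (0:ℝ) (2*Real.pi)) volume :=
    (hXc.inner hYc).integrableOn_Ioc
  have hGGint : IntegrableOn (fun θ => (⟪G θ, G θ⟫ : ℂ)) (Set.Ioc (0:ℝ) (2*Real.pi)) volume :=
    (hGc.inner hGc).integrableOn_Ioc
  -- the two Parseval identities
  have IB := key_integral r hr0 w T X Y hwsum hTsum hXsum hYsum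
  have IR := key_integral r hr0 S S G G hSsum hSsum hGsum hGsum
  -- summability of the complex coefficient series
  have hsummS : Summable fun k : ℕ => ((r^(2*k) : ℝ) : ℂ) * (⟪S k, S k⟫ : ℂ) := by
    refine Summable.of_norm (Summable.of_nonneg_of_le (fun k => norm_nonneg _) (fun k => ?_)
      (mul_summable hSsum hSsum (fun n => by positivity) (fun n => by positivity)))
    rw [norm_mul, Complex.norm_real, Real.norm_of_nonneg (by positivity)]
    calc r^(2*k) * ‖(⟪S k, S k⟫ : ℂ)‖ ≤ r^(2*k) * (‖S k‖ * ‖S k‖) := by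
          exact mul_le_mul_of_nonneg_left (norm_inner_le_norm _ _) (by positivity)
      _ = (r ^ k * ‖S k‖) * (r ^ k * ‖S k‖) := by rw [two_mul, pow_add]; ring
  have hsummB : Summable fun k : ℕ => ((r^(2*k) : ℝ) : ℂ) * (⟪w k, T k⟫ : ℂ) := by
    refine Summable.of_norm (Summable.of_nonneg_of_le (fun k => norm_nonneg _) (fun k => ?_)
      (mul_summable hwsum hTsum (fun n => by positivity) (fun n => by positivity)))
    rw [norm_mul, Complex.norm_real, Real.norm_of_nonneg (by positivity)]
    calc r^(2*k) * ‖(⟪w k, T k⟫ : ℂ)‖ ≤ r^(2*k) * (‖w k‖ * ‖T k‖) := by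
          exact mul_le_mul_of_nonneg_left (norm_inner_le_norm _ _) (by positivity)
      _ = (r ^ k * ‖w k‖) * (r ^ k * ‖T k‖) := by rw [two_mul, pow_add]; ring
  -- integrate the pointwise inequality
  have hmono : (∫ θ in Set.Ioc (0:ℝ) (2*Real.pi), γ * ‖G θ‖ ^ 2)
      ≤ ∫ θ in Set.Ioc (0:ℝ) (2*Real.pi), (⟪X θ, Y θ⟫ : ℂ).re := by
    refine setIntegral_mono_on ?_ ?_ measurableSet_Ioc (fun θ _ => hpt θ)
    · exact (continuous_const.mul ((hGc.norm).pow 2)).integrableOn_Ioc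
    · exact ((Complex.continuous_re.comp (hXc.inner hYc))).integrableOn_Ioc
  -- compute the left integral
  have hL : (∫ θ in Set.Ioc (0:ℝ) (2*Real.pi), γ * ‖G θ‖ ^ 2)
      = (2*Real.pi) * (γ * ∑' k : ℕ, r ^ (2*k) * ‖S k‖ ^ 2) := by
    rw [integral_const_mul]
    have h1 : (∫ θ in Set.Ioc (0:ℝ) (2*Real.pi), ‖G θ‖ ^ 2)
        = ∫ θ in Set.Ioc (0:ℝ) (2*Real.pi), (⟪G θ, G θ⟫ : ℂ).re := by
      refine setIntegral_congr_fun measurableSet_Ioc (fun θ _ => ?_)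
      rw [inner_self_eq_norm_sq_to_K (𝕜 := ℂ)]
      simp [← Complex.ofReal_pow]
    have h2 : (∫ θ in Set.Ioc (0:ℝ) (2*Real.pi), (⟪G θ, G θ⟫ : ℂ).re)
        = (((2*Real.pi : ℝ) : ℂ) * ∑' k : ℕ, ((r^(2*k) : ℝ) : ℂ) * (⟪S k, S k⟫ : ℂ)).re := by
      rw [← IR]
      exact (integral_re hGGint)
    have h3 : (∫ θ in Set.Ioc (0:ℝ) (2*Real.pi), ‖G θ‖ ^ 2)
        = 2*Real.pi * ∑' k : ℕ, r ^ (2*k) * ‖S k‖ ^ 2 := by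
      rw [h1, h2, Complex.re_ofReal_mul, Complex.re_tsum hsummS]
      congr 1
      refine tsum_congr fun k => ?_
      rw [Complex.re_ofReal_mul, inner_self_eq_norm_sq_to_K (𝕜 := ℂ)]
      simp [← Complex.ofReal_pow]
    rw [h3]
    ring
  -- compute the right integral
  have hR : (∫ θ in Set.Ioc (0:ℝ) (2*Real.pi), (⟪X θ, Y θ⟫ : ℂ).re)
      = (2*Real.pi) * ∑' k : ℕ, r ^ (2*k) * (⟪w k, T k⟫ : ℂ).re := by
    have h2 : (∫ θ in Set.Ioc (0:ℝ) (2*Real.pi), (⟪X θ, Y θ⟫ : ℂ).re)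
        = (((2*Real.pi : ℝ) : ℂ) * (∑' k : ℕ, ((r^(2*k) : ℝ) : ℂ) * (⟪w k, T k⟫ : ℂ))).re := by
      rw [← IB]
      exact (integral_re hXYint)
    rw [h2, Complex.re_ofReal_mul, Complex.re_tsum hsummB]
    congr 1
    exact tsum_congr fun k => Complex.re_ofReal_mul _ _
  rw [hL, hR] at hmono
  have h2π : (0:ℝ) < 2*Real.pi := by positivity
  exact le_of_mul_le_mul_left hmono h2π

lemma main_lemma (γ : ℝ) (hγ : 0 ≤ γ) (ρ : ℝ) (hρ0 : 0 < ρ) (hρ1 : ρ < 1)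
    (Bop Rop : ℂ → (V →L[ℂ] V)) (Δt : ℝ)
    (hpos' : ∀ (v : V) (ζ : ℂ), ‖ζ‖ ≤ ρ →
      γ * ‖Rop (bdf2 ζ / Δt) v‖ ^ 2 ≤ (⟪v, Bop (bdf2 ζ / Δt) v⟫ : ℂ).re)
    (B R : ℕ → (V →L[ℂ] V))
    (hBw : ∀ ζ : ℂ, ‖ζ‖ ≤ ρ → HasSum (fun n => ζ ^ n • B n) (Bop (bdf2 ζ / Δt)))
    (hRw : ∀ ζ : ℂ, ‖ζ‖ ≤ ρ → HasSum (fun n => ζ ^ n • R n) (Rop (bdf2 ζ / Δt)))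
    (w : ℕ → V) (N : ℕ) (hN : ∀ n, N ≤ n → w n = 0)
    (S T : ℕ → V)
    (hS : ∀ n, S n = ∑ j ∈ Finset.range (n+1), R (n-j) (w j))
    (hT : ∀ n, T n = ∑ j ∈ Finset.range (n+1), B (n-j) (w j))
    (CB CR : ℝ) (hCB : ∀ n, ρ^n * ‖B n‖ ≤ CB) (hCR : ∀ n, ρ^n * ‖R n‖ ≤ CR) :
    γ * ∑' n : ℕ, ρ ^ (2*n) * ‖S n‖ ^ 2 ≤ ∑' n : ℕ, ρ ^ (2*n) * (⟪w n, T n⟫ : ℂ).re := by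
  have hCB0 : 0 ≤ CB := le_trans (by positivity) (hCB 0)
  have hCR0 : 0 ≤ CR := le_trans (by positivity) (hCR 0)
  have hwnorm : Summable fun j => ‖w j‖ := by
    refine summable_of_ne_finset_zero (s := Finset.range N) (fun j hj => ?_)
    rw [hN j (by simpa using hj)]; simp
  set W0 : ℝ := ∑' j, ‖w j‖ with hW0
  have hW00 : 0 ≤ W0 := tsum_nonneg (fun j => norm_nonneg _)
  -- summability of coefficient sequences at any radius r < ρ
  have hwsum_any : ∀ r : ℝ, Summable fun n => r ^ n * ‖w n‖ := by
    intro r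
    refine summable_of_ne_finset_zero (s := Finset.range N) (fun j hj => ?_)
    rw [hN j (by simpa using hj)]; simp
  have hconv_bound : ∀ (C : ℝ) (U : ℕ → (V →L[ℂ] V)) (Z : ℕ → V), 0 ≤ C →
      (∀ n, ρ^n * ‖U n‖ ≤ C) →
      (∀ n, Z n = ∑ j ∈ Finset.range (n+1), U (n-j) (w j)) →
      ∀ r : ℝ, 0 < r → r < ρ → Summable fun n => r ^ n * ‖Z n‖ := by
    intro C U Z hC0 hC hZ r hr0 hrρ
    have hq0 : (0:ℝ) ≤ r / ρ := by positivity
    have hq1 : r / ρ < 1 := (div_lt_one hρ0).2 hrρ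
    refine Summable.of_nonneg_of_le (fun n => by positivity) (fun n => ?_)
      (((summable_geometric_of_lt_one hq0 hq1).mul_left (C * W0)))
    have hZn : ‖Z n‖ ≤ C / ρ^n * W0 := by
      rw [hZ n]
      calc ‖∑ j ∈ Finset.range (n+1), U (n-j) (w j)‖
          ≤ ∑ j ∈ Finset.range (n+1), ‖U (n-j) (w j)‖ := norm_sum_le _ _
        _ ≤ ∑ j ∈ Finset.range (n+1), (C / ρ^n) * ‖w j‖ := by
            refine Finset.sum_le_sum (fun j hj => ?_)
            refine le_trans ((U (n-j)).le_opNorm (w j)) ?_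
            refine mul_le_mul_of_nonneg_right ?_ (norm_nonneg _)
            have h1 : ρ^(n-j) * ‖U (n-j)‖ ≤ C := hC (n-j)
            have h2 : (0:ℝ) < ρ^(n-j) := by positivity
            have h3 : ρ^n ≤ ρ^(n-j) := pow_le_pow_of_le_one hρ0.le hρ1.le (Nat.sub_le n j)
            calc ‖U (n-j)‖ = (ρ^(n-j) * ‖U (n-j)‖) / ρ^(n-j) := by field_simp
              _ ≤ C / ρ^(n-j) := by gcongr
              _ ≤ C / ρ^n := by gcongr
        _ = (C / ρ^n) * ∑ j ∈ Finset.range (n+1), ‖w j‖ := by rw [Finset.mul_sum]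
        _ ≤ (C / ρ^n) * W0 := by
            refine mul_le_mul_of_nonneg_left ?_ (by positivity)
            exact Summable.sum_le_tsum _ (fun j _ => norm_nonneg _) hwnorm
    calc r ^ n * ‖Z n‖ ≤ r ^ n * (C / ρ^n * W0) :=
          mul_le_mul_of_nonneg_left hZn (by positivity)
      _ = C * W0 * (r/ρ)^n := by rw [div_pow]; field_simp
  have hTsum_any := hconv_bound CB B T hCB0 hCB hT
  have hSsum_any := hconv_bound CR R S hCR0 hCR hS
  -- the key inequality for every radius r < ρ
  have hstep : ∀ r : ℝ, 0 < r → r < ρ →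
      γ * ∑' k : ℕ, r ^ (2*k) * ‖S k‖ ^ 2 ≤ ∑' k : ℕ, r ^ (2*k) * (⟪w k, T k⟫ : ℂ).re := by
    intro r hr0 hrρ
    set ζ : ℝ → ℂ := fun θ => (r:ℂ) * Complex.exp ((θ:ℂ) * Complex.I) with hζ
    have hζnorm : ∀ θ, ‖ζ θ‖ = r := by
      intro θ; simp [hζ, Complex.norm_exp, abs_of_pos hr0]
    have hζρ : ∀ θ, ‖ζ θ‖ ≤ ρ := fun θ => (hζnorm θ) ▸ hrρ.le
    set X : ℝ → V := fun θ => ∑ m ∈ Finset.range N, (ζ θ)^m • w m with hX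
    have hXsum : ∀ θ : ℝ, HasSum (fun m => (ζ θ)^m • w m) (X θ) := by
      intro θ
      refine hasSum_sum_of_ne_finset_zero (fun m hm => ?_)
      rw [hN m (by simpa using hm)]; simp
    have hq0 : (0:ℝ) ≤ r / ρ := by positivity
    have hq1 : r / ρ < 1 := (div_lt_one hρ0).2 hrρ
    have hcoef : ∀ (C : ℝ) (U : ℕ → (V →L[ℂ] V)), 0 ≤ C → (∀ n, ρ^n * ‖U n‖ ≤ C) →
        ∀ θ : ℝ, Summable fun k => ‖(ζ θ)^k • U k‖ := by
      intro C U hC0 hC θ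
      refine Summable.of_nonneg_of_le (fun k => norm_nonneg _) (fun k => ?_)
        ((summable_geometric_of_lt_one hq0 hq1).mul_left C)
      rw [norm_smul, norm_pow, hζnorm]
      have h2 : (0:ℝ) < ρ^k := by positivity
      calc r ^ k * ‖U k‖ = (r/ρ)^k * (ρ^k * ‖U k‖) := by rw [div_pow]; field_simp
        _ ≤ (r/ρ)^k * C := mul_le_mul_of_nonneg_left (hC k) (by positivity)
        _ = C * (r/ρ)^k := by ring
    have hgw : ∀ θ : ℝ, Summable fun m => ‖(ζ θ)^m • w m‖ := by
      intro θ
      refine Summable.of_nonneg_of_le (fun m => norm_nonneg _) (fun m => ?_) (hwsum_any r)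
      rw [norm_smul, norm_pow, hζnorm]
    -- the convolution series
    have hconv : ∀ (U : ℕ → (V →L[ℂ] V)) (Z : ℕ → V) (Uop : V →L[ℂ] V),
        (∀ n, Z n = ∑ j ∈ Finset.range (n+1), U (n-j) (w j)) →
        (∀ θ : ℝ, Summable fun k => ‖(ζ θ)^k • U k‖) →
        ∀ θ : ℝ, HasSum (fun k => (ζ θ)^k • U k) Uop →
        HasSum (fun n => (ζ θ)^n • Z n) (Uop (X θ)) := by
      intro U Z Uop hZ hUs θ hUop
      have hc := cauchy_apply (hUs θ) (hgw θ) hUop (hXsum θ)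
      have he : ∀ n, (∑ k ∈ Finset.range (n + 1),
          ((ζ θ)^k • U k) ((ζ θ)^(n-k) • w (n-k))) = (ζ θ)^n • Z n := by
        intro n
        have h1 : ∀ k ∈ Finset.range (n+1),
            ((ζ θ)^k • U k) ((ζ θ)^(n-k) • w (n-k)) = (ζ θ)^n • (U k (w (n-k))) := by
          intro k hk
          rw [ContinuousLinearMap.smul_apply, (U k).map_smul, smul_smul, ← pow_add]
          congr 2
          have : k ≤ n := by simpa [Nat.lt_succ_iff] using hk
          omega
        rw [Finset.sum_congr rfl h1, ← Finset.smul_sum]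
        congr 1
        rw [hZ n]
        have h2 := Finset.sum_range_reflect (fun j => U (n-j) (w j)) (n+1)
        rw [← h2]
        refine Finset.sum_congr rfl (fun k hk => ?_)
        have hkn : k ≤ n := by simpa [Nat.lt_succ_iff] using hk
        have e1 : n + 1 - 1 - k = n - k := by omega
        have e2 : n - (n - k) = k := by omega
        rw [e1, e2]
      exact funext he ▸ hc
    set Y : ℝ → V := fun θ => Bop (bdf2 (ζ θ) / Δt) (X θ) with hY
    set G : ℝ → V := fun θ => Rop (bdf2 (ζ θ) / Δt) (X θ) with hG
    have hYsum : ∀ θ : ℝ, HasSum (fun n => (ζ θ)^n • T n) (Y θ) :=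
      fun θ => hconv B T (Bop (bdf2 (ζ θ) / Δt)) hT (hcoef CB B hCB0 hCB) θ
        (hBw (ζ θ) (hζρ θ))
    have hGsum : ∀ θ : ℝ, HasSum (fun n => (ζ θ)^n • S n) (G θ) :=
      fun θ => hconv R S (Rop (bdf2 (ζ θ) / Δt)) hS (hcoef CR R hCR0 hCR) θ
        (hRw (ζ θ) (hζρ θ))
    have hpt : ∀ θ : ℝ, γ * ‖G θ‖ ^ 2 ≤ (⟪X θ, Y θ⟫ : ℂ).re :=
      fun θ => hpos' (X θ) (ζ θ) (hζρ θ)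
    exact core γ r hr0 w S T X Y G (hwsum_any r) (hSsum_any r hr0 hrρ)
      (hTsum_any r hr0 hrρ) hXsum hGsum hYsum hpt
  -- reduce the right-hand side to a finite sum
  have hfin : ∀ r : ℝ, (∑' k : ℕ, r ^ (2*k) * (⟪w k, T k⟫ : ℂ).re)
      = ∑ k ∈ Finset.range N, r ^ (2*k) * (⟪w k, T k⟫ : ℂ).re := by
    intro r
    refine tsum_eq_sum (fun k hk => ?_)
    rw [hN k (by simpa using hk)]
    simp
  -- summability of the square series at any 0 < r < ρ
  have hsq_any : ∀ r : ℝ, 0 < r → r < ρ → Summable fun k : ℕ => r ^ (2*k) * ‖S k‖ ^ 2 := by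
    intro r hr0 hrρ
    have h := (hSsum_any r hr0 hrρ)
    have h2 : Summable fun k : ℕ => (r^k * ‖S k‖) * (r^k * ‖S k‖) := by
      obtain ⟨C, hC⟩ := h.tendsto_atTop_zero.bddAbove_range
      refine Summable.of_nonneg_of_le (fun n => by positivity) (fun n => ?_) (h.mul_left C)
      exact mul_le_mul_of_nonneg_right (hC (Set.mem_range_self n)) (by positivity)
    refine h2.congr (fun k => ?_)
    rw [two_mul, pow_add]; ring
  -- pass to the limit r → ρ⁻
  have hKbound : ∀ K : ℕ, γ * (∑ k ∈ Finset.range K, ρ ^ (2*k) * ‖S k‖ ^ 2)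
      ≤ ∑ k ∈ Finset.range N, ρ ^ (2*k) * (⟪w k, T k⟫ : ℂ).re := by
    intro K
    have hle : ∀ r : ℝ, 0 < r → r < ρ →
        γ * (∑ k ∈ Finset.range K, r ^ (2*k) * ‖S k‖ ^ 2)
          ≤ ∑ k ∈ Finset.range N, r ^ (2*k) * (⟪w k, T k⟫ : ℂ).re := by
      intro r hr0 hrρ
      refine le_trans ?_ ((hfin r) ▸ hstep r hr0 hrρ)
      refine mul_le_mul_of_nonneg_left ?_ hγ
      exact Summable.sum_le_tsum _ (fun k _ => by positivity) (hsq_any r hr0 hrρ)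
    have h1 : Filter.Tendsto (fun r : ℝ => γ * ∑ k ∈ Finset.range K, r ^ (2*k) * ‖S k‖ ^ 2)
        (nhdsWithin ρ (Set.Iio ρ))
        (nhds (γ * ∑ k ∈ Finset.range K, ρ ^ (2*k) * ‖S k‖ ^ 2)) := by
      refine Filter.Tendsto.mono_left ?_ nhdsWithin_le_nhds
      exact (Continuous.tendsto (continuous_const.mul (continuous_finset_sum _
        (fun k _ => (continuous_pow _).mul continuous_const))) ρ)
    have h2 : Filter.Tendsto (fun r : ℝ => ∑ k ∈ Finset.range N, r ^ (2*k) * (⟪w k, T k⟫ : ℂ).re)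
        (nhdsWithin ρ (Set.Iio ρ))
        (nhds (∑ k ∈ Finset.range N, ρ ^ (2*k) * (⟪w k, T k⟫ : ℂ).re)) := by
      refine Filter.Tendsto.mono_left ?_ nhdsWithin_le_nhds
      exact (Continuous.tendsto (continuous_finset_sum _
        (fun k _ => (continuous_pow _).mul continuous_const)) ρ)
    refine le_of_tendsto_of_tendsto h1 h2 ?_
    filter_upwards [self_mem_nhdsWithin,
      (eventually_gt_nhds hρ0).filter_mono nhdsWithin_le_nhds] with r hr1 hr2
    exact hle r hr2 hr1
  rw [hfin ρ]
  rcases eq_or_lt_of_le hγ with h0 | hγpos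
  · rw [← h0, zero_mul]
    have := hKbound 0
    rw [← h0] at this
    simpa using this
  · have hdiv : ∀ K : ℕ, ∑ k ∈ Finset.range K, ρ ^ (2*k) * ‖S k‖ ^ 2
        ≤ (∑ k ∈ Finset.range N, ρ ^ (2*k) * (⟪w k, T k⟫ : ℂ).re) / γ :=
      fun K => (le_div_iff₀' hγpos).2 (hKbound K)
    have htsum := Real.tsum_le_of_sum_range_le (fun k => by positivity) hdiv
    calc γ * ∑' k : ℕ, ρ ^ (2*k) * ‖S k‖ ^ 2
        ≤ γ * ((∑ k ∈ Finset.range N, ρ ^ (2*k) * (⟪w k, T k⟫ : ℂ).re) / γ) :=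
          mul_le_mul_of_nonneg_left htsum hγ
      _ = ∑ k ∈ Finset.range N, ρ ^ (2*k) * (⟪w k, T k⟫ : ℂ).re := by
          rw [mul_comm, div_mul_cancel₀ _ (ne_of_gt hγpos)]

end Aux

/-- convolution quadrature (BDF2) preserves the positivity of the
operator families.

`V` is a complex Hilbert space; via the Riesz identification the anti-duality
pairing `⟨w, B(s) w⟩` is the inner product `⟪w, B(s) w⟫`.  `B(s), R(s)` are
analytic families of bounded operators on `Re s ≥ σ` with bound `M |s|^μ`, and
`Re ⟨w, B(s) w⟩ ≥ γ ‖R(s) w‖²` there.  If `Δt > 0` and `ρ ∈ (0,1)` is such that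
`Re δ(ζ) ≥ σ Δt` for `|ζ| ≤ ρ`, and `Bₙ, Rₙ` are the convolution quadrature
weights, i.e. `B(δ(ζ)/Δt) = Σ Bₙ ζⁿ` and `R(δ(ζ)/Δt) = Σ Rₙ ζⁿ`, then for every
finitely supported `w : ℕ → V`,
`Σₙ ρ^{2n} Re ⟨wₙ, Σ_{j≤n} B_{n-j} w_j⟩ ≥ γ Σₙ ρ^{2n} ‖Σ_{j≤n} R_{n-j} w_j‖²`. -/
theorem convolution_quadrature_preserves_positivity
    {V : Type*} [NormedAddCommGroup V] [InnerProductSpace ℂ V] [CompleteSpace V]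
    (σ M μ γ : ℝ) (hσ : 0 < σ) (hM : 0 < M) (hμ : 0 ≤ μ) (hγ : 0 ≤ γ)
    (Bop Rop : ℂ → (V →L[ℂ] V))
    (hBanal : ∀ s : ℂ, σ ≤ s.re → AnalyticAt ℂ Bop s)
    (hRanal : ∀ s : ℂ, σ ≤ s.re → AnalyticAt ℂ Rop s)
    (hBbound : ∀ s : ℂ, σ ≤ s.re → ‖Bop s‖ ≤ M * ‖s‖ ^ μ)
    (hRbound : ∀ s : ℂ, σ ≤ s.re → ‖Rop s‖ ≤ M * ‖s‖ ^ μ)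
    (hpos : ∀ (w : V) (s : ℂ), σ ≤ s.re →
        γ * ‖Rop s w‖ ^ 2 ≤ (inner ℂ w (Bop s w) : ℂ).re)
    (Δt : ℝ) (hΔt : 0 < Δt)
    (ρ : ℝ) (hρ0 : 0 < ρ) (hρ1 : ρ < 1)
    (hρδ : ∀ ζ : ℂ, ‖ζ‖ ≤ ρ → σ * Δt ≤ (bdf2 ζ).re)
    (B R : ℕ → (V →L[ℂ] V))
    (hBw : ∀ ζ : ℂ, ‖ζ‖ ≤ ρ → HasSum (fun n => ζ ^ n • B n) (Bop (bdf2 ζ / Δt)))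
    (hRw : ∀ ζ : ℂ, ‖ζ‖ ≤ ρ → HasSum (fun n => ζ ^ n • R n) (Rop (bdf2 ζ / Δt))) :
    ∀ w : ℕ → V, (∃ N : ℕ, ∀ n, N ≤ n → w n = 0) →
      γ * ∑' n : ℕ, ρ ^ (2 * n) *
          ‖∑ j ∈ Finset.range (n + 1), R (n - j) (w j)‖ ^ 2 ≤
        ∑' n : ℕ, ρ ^ (2 * n) *
          (inner ℂ (w n) (∑ j ∈ Finset.range (n + 1), B (n - j) (w j)) : ℂ).re := by
  intro w hw
  obtain ⟨N, hN⟩ := hw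
  -- geometric bounds on the convolution quadrature weights
  have hρρ : ‖(ρ:ℂ)‖ ≤ ρ := by
    simp [Complex.norm_real, abs_of_pos hρ0]
  have hbound : ∀ (U : ℕ → (V →L[ℂ] V)) (Uop : V →L[ℂ] V),
      HasSum (fun n => (ρ:ℂ) ^ n • U n) Uop → ∃ C : ℝ, ∀ n, ρ ^ n * ‖U n‖ ≤ C := by
    intro U Uop hU
    have h1 : Filter.Tendsto (fun n => (ρ:ℂ) ^ n • U n) Filter.atTop (nhds 0) :=
      hU.summable.tendsto_atTop_zero
    have h2 : Filter.Tendsto (fun n => ρ ^ n * ‖U n‖) Filter.atTop (nhds 0) := by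
      have := h1.norm
      simpa [norm_smul, norm_pow, Complex.norm_real, abs_of_pos hρ0] using this
    obtain ⟨C, hC⟩ := h2.bddAbove_range
    exact ⟨C, fun n => hC (Set.mem_range_self n)⟩
  obtain ⟨CB, hCB⟩ := hbound B _ (hBw (ρ:ℂ) hρρ)
  obtain ⟨CR, hCR⟩ := hbound R _ (hRw (ρ:ℂ) hρρ)
  -- positivity on the disc of radius ρ
  have hpos' : ∀ (v : V) (ζ : ℂ), ‖ζ‖ ≤ ρ →
      γ * ‖Rop (bdf2 ζ / Δt) v‖ ^ 2 ≤ (inner ℂ v (Bop (bdf2 ζ / Δt) v) : ℂ).re := by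
    intro v ζ hζ
    refine hpos v _ ?_
    rw [Complex.div_ofReal_re]
    exact (le_div_iff₀ hΔt).2 (hρδ ζ hζ)
  exact main_lemma γ hγ ρ hρ0 hρ1 Bop Rop Δt hpos' B R hBw hRw w N hN
    (fun n => ∑ j ∈ Finset.range (n + 1), R (n - j) (w j))
    (fun n => ∑ j ∈ Finset.range (n + 1), B (n - j) (w j))
    (fun n => rfl) (fun n => rfl) CB CR hCB hCR
end

section
/- Let H be a Hilbert space, let t > 0, and let ρ : [0,t] → H be twice continuously differentiable with ρ(0) = 0 and ρ'(0) = 0. Then ∫₀^t ‖ρ(τ)‖² dτ ≤ (t⁴/12) ∫₀^t ‖ρ''(τ)‖² dτ. -/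
open Set MeasureTheory

/-- if `ρ : [0,t] → H` (H a real or complex Hilbert space) is twice
continuously differentiable with `ρ(0) = 0` and `ρ'(0) = 0`, then
`∫₀ᵗ ‖ρ(τ)‖² dτ ≤ (t⁴/12) ∫₀ᵗ ‖ρ''(τ)‖² dτ`. -/
theorem sq_integral_le_of_two_vanishing_derivs
    {𝕜 : Type*} [RCLike 𝕜] {H : Type*} [NormedAddCommGroup H]
    [InnerProductSpace 𝕜 H] [CompleteSpace H]
    [NormedSpace ℝ H] [IsScalarTower ℝ 𝕜 H]
    (t : ℝ) (ht : 0 < t) (ρ : ℝ → H)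
    (hρ : ContDiffOn ℝ 2 ρ (Icc 0 t))
    (hρ0 : ρ 0 = 0)
    (hρ'0 : derivWithin ρ (Icc 0 t) 0 = 0) :
    ∫ τ in (0:ℝ)..t, ‖ρ τ‖ ^ 2 ≤
      t ^ 4 / 12 * ∫ τ in (0:ℝ)..t, ‖derivWithin (derivWithin ρ (Icc 0 t)) (Icc 0 t) τ‖ ^ 2 := by
  set D1 := derivWithin ρ (Icc 0 t) with hD1def
  set D2 := derivWithin D1 (Icc 0 t) with hD2def
  have hu : UniqueDiffOn ℝ (Icc (0:ℝ) t) := uniqueDiffOn_Icc ht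
  have hρc : ContinuousOn ρ (Icc 0 t) := hρ.continuousOn
  have hD1' : ContDiffOn ℝ 1 D1 (Icc 0 t) := hρ.derivWithin hu (by norm_num)
  have hD1c : ContinuousOn D1 (Icc 0 t) := hD1'.continuousOn
  have hD2c : ContinuousOn D2 (Icc 0 t) := (hD1'.derivWithin (m := 0) hu (by norm_num)).continuousOn
  -- derivatives at interior points
  have hderρ : ∀ x ∈ Ioo (0:ℝ) t, HasDerivAt ρ (D1 x) x := by
    intro x hx
    exact ((hρ.differentiableOn two_ne_zero x (Ioo_subset_Icc_self hx)).hasDerivWithinAt).hasDerivAt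
      (Icc_mem_nhds hx.1 hx.2)
  have hderD1 : ∀ x ∈ Ioo (0:ℝ) t, HasDerivAt D1 (D2 x) x := by
    intro x hx
    exact ((hD1'.differentiableOn one_ne_zero x (Ioo_subset_Icc_self hx)).hasDerivWithinAt).hasDerivAt
      (Icc_mem_nhds hx.1 hx.2)
  set C := ∫ τ in (0:ℝ)..t, ‖D2 τ‖ ^ 2 with hCdef
  have hD2sqInt : IntervalIntegrable (fun s => ‖D2 s‖^2) volume 0 t := by
    apply ContinuousOn.intervalIntegrable
    rw [uIcc_of_le ht.le]
    exact (hD2c.norm.pow 2)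
  have hC0 : 0 ≤ C := intervalIntegral.integral_nonneg ht.le (fun x _ => sq_nonneg _)
  -- key pointwise bound
  have key : ∀ τ ∈ Icc (0:ℝ) t, ‖ρ τ‖^2 ≤ τ^3/3 * C := by
    intro τ hτ
    have hsub : Icc (0:ℝ) τ ⊆ Icc 0 t := Icc_subset_Icc le_rfl hτ.2
    -- Taylor representation
    have rep : ρ τ = ∫ s in (0:ℝ)..τ, (τ - s) • D2 s := by
      have hg : ∀ x ∈ Ioo (0:ℝ) τ, HasDerivWithinAt (fun s => ρ s + (τ - s) • D1 s)
          ((τ - x) • D2 x) (Ioi x) x := by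
        intro x hx
        have hx' : x ∈ Ioo (0:ℝ) t := ⟨hx.1, lt_of_lt_of_le hx.2 hτ.2⟩
        have h3 : HasDerivAt (fun s : ℝ => τ - s) (-1) x := by
          simpa using (hasDerivAt_id x).const_sub τ
        have := (hderρ x hx').add ((h3.smul (hderD1 x hx')))
        have h4 : D1 x + ((τ - x) • D2 x + (-1 : ℝ) • D1 x) = (τ - x) • D2 x := by
          module
        rw [h4] at this
        exact this.hasDerivWithinAt
      have hcont : ContinuousOn (fun s => ρ s + (τ - s) • D1 s) (Icc 0 τ) := by
        exact (hρc.mono hsub).add (((continuousOn_const.sub continuousOn_id).smul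
          (hD1c.mono hsub)))
      have hint : IntervalIntegrable (fun s => (τ - s) • D2 s) volume 0 τ := by
        apply ContinuousOn.intervalIntegrable
        rw [uIcc_of_le hτ.1]
        exact (continuousOn_const.sub continuousOn_id).smul (hD2c.mono hsub)
      have := intervalIntegral.integral_eq_sub_of_hasDeriv_right_of_le hτ.1 hcont hg hint
      rw [this]
      simp [hρ0, hρ'0, ← hD1def]
    -- norm bound
    have hnorm : ‖ρ τ‖ ≤ ∫ s in (0:ℝ)..τ, (τ - s) * ‖D2 s‖ := by
      rw [rep]
      refine (intervalIntegral.norm_integral_le_integral_norm hτ.1).trans_eq ?_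
      apply intervalIntegral.integral_congr
      intro s hs
      rw [uIcc_of_le hτ.1] at hs
      show ‖(τ - s) • D2 s‖ = (τ - s) * ‖D2 s‖
      rw [norm_smul, Real.norm_eq_abs, abs_of_nonneg (by linarith [hs.2])]
    -- Cauchy-Schwarz
    have hCS : (∫ s in (0:ℝ)..τ, (τ - s) * ‖D2 s‖)^2 ≤
        (∫ s in (0:ℝ)..τ, (τ - s)^2) * (∫ s in (0:ℝ)..τ, ‖D2 s‖^2) := by
      have hIoc : Ioc (0:ℝ) τ ⊆ Icc 0 t := fun x hx => ⟨hx.1.le, hx.2.trans hτ.2⟩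
      set μ := volume.restrict (Ioc (0:ℝ) τ) with hμ
      have hpq : Real.HolderConjugate 2 2 := ⟨by norm_num, by norm_num, by norm_num⟩
      obtain ⟨M, hM⟩ := isCompact_Icc.exists_bound_of_continuousOn hD2c
      have h2' : ENNReal.ofReal (2:ℝ) = 2 := by
        norm_num [ENNReal.ofReal_ofNat]
      have hfm : MemLp (fun s : ℝ => τ - s) (ENNReal.ofReal 2) μ := by
        rw [h2']
        refine MemLp.of_bound ((continuous_const.sub continuous_id).aestronglyMeasurable) τ ?_
        filter_upwards [ae_restrict_mem measurableSet_Ioc] with x hx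
        rw [Real.norm_eq_abs, abs_of_nonneg (by linarith [hx.2])]
        linarith [hx.1]
      have hgm : MemLp (fun s : ℝ => ‖D2 s‖) (ENNReal.ofReal 2) μ := by
        rw [h2']
        refine MemLp.of_bound ?_ M ?_
        · exact ((hD2c.mono hIoc).norm.aestronglyMeasurable measurableSet_Ioc)
        · filter_upwards [ae_restrict_mem measurableSet_Ioc] with x hx
          rw [Real.norm_eq_abs, abs_of_nonneg (norm_nonneg _)]
          exact hM x (hIoc hx)
      have hfnn : 0 ≤ᵐ[μ] (fun s : ℝ => τ - s) := by
        filter_upwards [ae_restrict_mem measurableSet_Ioc] with x hx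
        simp only [Pi.zero_apply]
        linarith [hx.2]
      have hgnn : 0 ≤ᵐ[μ] (fun s : ℝ => ‖D2 s‖) :=
        Filter.Eventually.of_forall (fun x => norm_nonneg _)
      have hold := integral_mul_le_Lp_mul_Lq_of_nonneg hpq hfnn hgnn hfm hgm
      have hr2 : ∀ x : ℝ, x ^ (2:ℝ) = x ^ 2 := fun x => by
        rw [show (2:ℝ) = ((2:ℕ):ℝ) by norm_num, Real.rpow_natCast]
      simp only [hr2] at hold
      set X := ∫ a, (τ - a)^2 ∂μ with hX
      set Y := ∫ a, ‖D2 a‖^2 ∂μ with hY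
      have hX0 : 0 ≤ X := integral_nonneg (fun x => sq_nonneg _)
      have hY0 : 0 ≤ Y := integral_nonneg (fun x => sq_nonneg _)
      have heq1 : (∫ s in (0:ℝ)..τ, (τ - s) * ‖D2 s‖) = ∫ a, (τ - a) * ‖D2 a‖ ∂μ := by
        rw [intervalIntegral.integral_of_le hτ.1]
      have heq2 : (∫ s in (0:ℝ)..τ, (τ - s)^2) = X := by
        rw [intervalIntegral.integral_of_le hτ.1]
      have heq3 : (∫ s in (0:ℝ)..τ, ‖D2 s‖^2) = Y := by
        rw [intervalIntegral.integral_of_le hτ.1]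
      rw [heq1, heq2, heq3]
      have hA0' : (0:ℝ) ≤ ∫ a, (τ - a) * ‖D2 a‖ ∂μ := by
        apply integral_nonneg_of_ae
        filter_upwards [hfnn] with x hx
        exact mul_nonneg hx (norm_nonneg _)
      calc (∫ a, (τ - a) * ‖D2 a‖ ∂μ)^2 ≤ (X ^ ((1:ℝ)/2) * Y ^ ((1:ℝ)/2))^2 :=
            pow_le_pow_left₀ hA0' hold 2
        _ = X * Y := by
            rw [mul_pow, ← Real.rpow_natCast (X ^ ((1:ℝ)/2)) 2,
              ← Real.rpow_natCast (Y ^ ((1:ℝ)/2)) 2,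
              ← Real.rpow_mul hX0, ← Real.rpow_mul hY0]
            norm_num
    have h1 : (∫ s in (0:ℝ)..τ, (τ - s)^2) = τ^3/3 := by
      rw [intervalIntegral.integral_comp_sub_left (fun s => s^2) τ]
      simp [integral_pow]; ring
    have h2 : (∫ s in (0:ℝ)..τ, ‖D2 s‖^2) ≤ C := by
      rw [hCdef]
      apply intervalIntegral.integral_mono_interval le_rfl hτ.1 hτ.2
      · exact Filter.Eventually.of_forall (fun x => sq_nonneg _)
      · exact hD2sqInt
    have hA0 : (0:ℝ) ≤ ∫ s in (0:ℝ)..τ, (τ - s) * ‖D2 s‖ := by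
      apply intervalIntegral.integral_nonneg hτ.1
      intro x hx
      exact mul_nonneg (by linarith [hx.2]) (norm_nonneg _)
    calc ‖ρ τ‖^2 ≤ (∫ s in (0:ℝ)..τ, (τ - s) * ‖D2 s‖)^2 := by
          apply pow_le_pow_left₀ (norm_nonneg _) hnorm
      _ ≤ (∫ s in (0:ℝ)..τ, (τ - s)^2) * (∫ s in (0:ℝ)..τ, ‖D2 s‖^2) := hCS
      _ ≤ τ^3/3 * C := by
          rw [h1]
          exact mul_le_mul_of_nonneg_left h2 (div_nonneg (pow_nonneg hτ.1 3) (by norm_num))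
  -- integrate
  have hmono : ∫ τ in (0:ℝ)..t, ‖ρ τ‖^2 ≤ ∫ τ in (0:ℝ)..t, τ^3/3 * C := by
    apply intervalIntegral.integral_mono_on ht.le
    · apply ContinuousOn.intervalIntegrable
      rw [uIcc_of_le ht.le]
      exact hρc.norm.pow 2
    · apply ContinuousOn.intervalIntegrable
      fun_prop
    · exact key
  refine hmono.trans_eq ?_
  have : ∫ τ in (0:ℝ)..t, τ^3/3 * C = C/3 * ∫ τ in (0:ℝ)..t, τ^3 := by
    rw [← intervalIntegral.integral_const_mul]
    apply intervalIntegral.integral_congr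
    intro x _; ring
  rw [this, integral_pow]
  ring
end
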